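/- Let n ≥ 1 be an integer, β > 0 a real number, σ > 0, and l ≥ 1 an integer, and suppose 1 + β − n − 4l < 0. Define ξ*(c) = (cσ + √(c²σ² + 4σ(1+β+n)))/4 and MN(c) = c^{(1+β−n−4l)/4} · ( ξ*(c)^{(1+β+n)/2} · exp(c·ξ*(c)) / exp(ξ*(c)²/σ) )^{1/2} for c > 0. Then MN attains a global minimum on (0, ∞); that is, there exists c₀ > 0 with MN(c₀) ≤ MN(c) for all c > 0. -/

import Mathlib

open Real Filter Set Topology

/-- Auxiliary lemma: the abstract form of the MN function attains a minimum on `(0,∞)`. -/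
lemma MN_aux (A E σ : ℝ) (hA : 0 < A) (hE : E < 0) (hσ : 0 < σ)
    (ξ F : ℝ → ℝ)
    (hξ : ∀ c : ℝ, ξ c = (c * σ + Real.sqrt (c ^ 2 * σ ^ 2 + 4 * σ * A)) / 4)
    (hF : ∀ c : ℝ, F c =
      c ^ E * ((ξ c) ^ (A / 2) * Real.exp (c * ξ c) / Real.exp ((ξ c) ^ 2 / σ))
        ^ ((1 : ℝ) / 2)) :
    ∃ c₀ : ℝ, 0 < c₀ ∧ ∀ c : ℝ, 0 < c → F c₀ ≤ F c := by
  -- basic facts about ξ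
  have hrad0 : ∀ c : ℝ, (0:ℝ) ≤ c ^ 2 * σ ^ 2 + 4 * σ * A := by intro c; positivity
  have hξpos : ∀ c : ℝ, 0 < ξ c := by
    intro c
    rw [hξ]
    have h1 : |c * σ| < Real.sqrt (c ^ 2 * σ ^ 2 + 4 * σ * A) := by
      rw [show |c * σ| = Real.sqrt ((c * σ) ^ 2) by rw [Real.sqrt_sq_eq_abs]]
      apply Real.sqrt_lt_sqrt (by positivity)
      nlinarith
    have h2 : -(c * σ) ≤ |c * σ| := neg_le_abs _
    linarith
  have hξge : ∀ c : ℝ, 0 ≤ c → c * σ / 2 ≤ ξ c := by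
    intro c hc
    rw [hξ]
    have h1 : c * σ ≤ Real.sqrt (c ^ 2 * σ ^ 2 + 4 * σ * A) := by
      rw [show c * σ = Real.sqrt ((c * σ) ^ 2) by
        rw [Real.sqrt_sq (by positivity)]]
      apply Real.sqrt_le_sqrt
      nlinarith
    linarith
  have hξcont : Continuous ξ := by
    have : ξ = fun c : ℝ => (c * σ + Real.sqrt (c ^ 2 * σ ^ 2 + 4 * σ * A)) / 4 :=
      funext hξ
    rw [this]
    continuity
  -- the identity c ξ - ξ²/σ = c ξ / 2 - A / 4
  have hident : ∀ c : ℝ, c * ξ c - (ξ c) ^ 2 / σ = c * ξ c / 2 - A / 4 := by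
    intro c
    have hs2 : Real.sqrt (c ^ 2 * σ ^ 2 + 4 * σ * A) ^ 2 = c ^ 2 * σ ^ 2 + 4 * σ * A :=
      Real.sq_sqrt (hrad0 c)
    rw [hξ]
    field_simp
    rw [show σ * (c ^ 2 * σ + 4 * A) = c ^ 2 * σ ^ 2 + 4 * σ * A by ring]
    nlinarith [hs2]
  -- the inner function
  set G : ℝ → ℝ := fun c =>
    ((ξ c) ^ (A / 2) * Real.exp (c * ξ c) / Real.exp ((ξ c) ^ 2 / σ)) ^ ((1:ℝ)/2)
    with hG_def
  have hGbpos : ∀ c : ℝ, 0 < (ξ c) ^ (A / 2) * Real.exp (c * ξ c) / Real.exp ((ξ c) ^ 2 / σ) := by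
    intro c
    have := hξpos c
    positivity
  have hGpos : ∀ c : ℝ, 0 < G c := fun c => Real.rpow_pos_of_pos (hGbpos c) _
  have hGcont : Continuous G := by
    rw [continuous_iff_continuousAt]
    intro c
    have h1 : ContinuousAt (fun c : ℝ => (ξ c) ^ (A / 2)) c :=
      hξcont.continuousAt.rpow_const (Or.inl (hξpos c).ne')
    have h2 : ContinuousAt
        (fun c : ℝ => (ξ c) ^ (A / 2) * Real.exp (c * ξ c) / Real.exp ((ξ c) ^ 2 / σ)) c := by
      apply ContinuousAt.div
      · exact h1.mul (Real.continuous_exp.continuousAt.comp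
          (continuousAt_id.mul hξcont.continuousAt))
      · exact Real.continuous_exp.continuousAt.comp
          (((hξcont.continuousAt.pow 2).div_const σ))
      · exact (Real.exp_pos _).ne'
    exact h2.rpow_const (Or.inl (hGbpos c).ne')
  have hFeq : F = fun c : ℝ => c ^ E * G c := funext hF
  -- tendsto at 0+
  have h0 : Tendsto F (𝓝[>] (0:ℝ)) atTop := by
    rw [hFeq]
    have h1 : Tendsto (fun c : ℝ => c ^ E) (𝓝[>] (0:ℝ)) atTop := by
      have h := (tendsto_rpow_atTop (neg_pos.mpr hE)).comp tendsto_inv_nhdsGT_zero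
      refine h.congr' ?_
      filter_upwards [self_mem_nhdsWithin] with c (hc : (0:ℝ) < c)
      simp only [Function.comp_apply]
      rw [Real.inv_rpow hc.le, Real.rpow_neg hc.le, inv_inv]
    have h2 : Tendsto G (𝓝[>] (0:ℝ)) (𝓝 (G 0)) :=
      (hGcont.tendsto 0).mono_left nhdsWithin_le_nhds
    exact h1.atTop_mul_pos (hGpos 0) h2
  -- tendsto at infinity
  have hinfty : Tendsto F atTop atTop := by
    set K : ℝ := (σ / 2) ^ (A / 4) * Real.exp (-(A / 8)) with hK_def
    have hKpos : 0 < K := by positivity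
    have hbase : Tendsto (fun c : ℝ => K * (Real.exp (σ / 8 * c) / c ^ (-E))) atTop atTop :=
      (tendsto_exp_mul_div_rpow_atTop (-E) (σ / 8) (by positivity)).const_mul_atTop hKpos
    refine tendsto_atTop_mono' _ ?_ hbase
    filter_upwards [eventually_ge_atTop (1:ℝ)] with c hc1
    have hc0 : (0:ℝ) < c := lt_of_lt_of_le one_pos hc1
    have hx : 0 < ξ c := hξpos c
    have hxge : c * σ / 2 ≤ ξ c := hξge c hc0.le
    have hxσ : σ / 2 ≤ ξ c := le_trans (by nlinarith) hxge
    -- rewrite F c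
    have hGc : G c = ((ξ c) ^ (A / 2) * Real.exp (c * ξ c / 2 - A / 4)) ^ ((1:ℝ)/2) := by
      have h := hident c
      simp only [hG_def]
      rw [mul_div_assoc, ← Real.exp_sub, h]
    have hb0le : (σ / 2) ^ (A / 2) * Real.exp (σ / 4 * c - A / 4)
        ≤ (ξ c) ^ (A / 2) * Real.exp (c * ξ c / 2 - A / 4) := by
      have e1 : (σ / 2) ^ (A / 2) ≤ (ξ c) ^ (A / 2) :=
        Real.rpow_le_rpow (by positivity) hxσ (by positivity)
      have e2 : Real.exp (σ / 4 * c - A / 4) ≤ Real.exp (c * ξ c / 2 - A / 4) := by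
        apply Real.exp_le_exp.mpr
        nlinarith
      exact mul_le_mul e1 e2 (Real.exp_pos _).le (by positivity)
    have hstep : ((σ / 2) ^ (A / 2) * Real.exp (σ / 4 * c - A / 4)) ^ ((1:ℝ)/2) ≤ G c := by
      rw [hGc]
      exact Real.rpow_le_rpow (by positivity) hb0le (by norm_num)
    have hsimp : ((σ / 2) ^ (A / 2) * Real.exp (σ / 4 * c - A / 4)) ^ ((1:ℝ)/2)
        = (σ / 2) ^ (A / 4) * Real.exp (σ / 8 * c - A / 8) := by
      rw [Real.mul_rpow (by positivity) (Real.exp_pos _).le,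
        ← Real.rpow_mul (by positivity : (0:ℝ) ≤ σ / 2), ← Real.exp_mul,
        show A / 2 * (1 / 2) = A / 4 by ring,
        show (σ / 4 * c - A / 4) * (1 / 2) = σ / 8 * c - A / 8 by ring]
    have hkey : K * (Real.exp (σ / 8 * c) / c ^ (-E))
        = c ^ E * ((σ / 2) ^ (A / 4) * Real.exp (σ / 8 * c - A / 8)) := by
      have hcE : (0:ℝ) < c ^ E := Real.rpow_pos_of_pos hc0 E
      rw [Real.rpow_neg hc0.le, Real.exp_sub, hK_def, Real.exp_neg]
      field_simp
    calc K * (Real.exp (σ / 8 * c) / c ^ (-E))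
        = c ^ E * ((σ / 2) ^ (A / 4) * Real.exp (σ / 8 * c - A / 8)) := hkey
      _ ≤ c ^ E * G c := by
          apply mul_le_mul_of_nonneg_left _ (Real.rpow_nonneg hc0.le _)
          rw [← hsimp]; exact hstep
      _ = F c := (hF c).symm ▸ rfl
  -- extract bounds
  have hev0 : ∀ᶠ c in 𝓝[>] (0:ℝ), F 1 < F c := h0.eventually_gt_atTop (F 1)
  rw [Filter.eventually_iff] at hev0
  obtain ⟨a', ha'mem, ha'⟩ := mem_nhdsGT_iff_exists_Ioc_subset.mp hev0
  obtain ⟨b, hb⟩ := Filter.eventually_atTop.mp (hinfty.eventually_gt_atTop (F 1))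
  set a : ℝ := min a' 1 with ha_def
  have ha_pos : 0 < a := lt_min ha'mem one_pos
  have ha_le1 : a ≤ 1 := min_le_right _ _
  set B : ℝ := max b 1 with hB_def
  have hB1 : (1:ℝ) ≤ B := le_max_right _ _
  have h1S : (1:ℝ) ∈ Icc a B := ⟨ha_le1, hB1⟩
  have hFcont : ContinuousOn F (Icc a B) := by
    rw [hFeq]
    apply ContinuousOn.mul
    · intro c hc
      exact (continuousAt_id.rpow_const
        (Or.inl (lt_of_lt_of_le ha_pos hc.1).ne')).continuousWithinAt
    · exact hGcont.continuousOn
  obtain ⟨c₀, hc₀S, hmin⟩ := isCompact_Icc.exists_isMinOn ⟨1, h1S⟩ hFcont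
  refine ⟨c₀, lt_of_lt_of_le ha_pos hc₀S.1, ?_⟩
  intro c hc
  have hF1 : F c₀ ≤ F 1 := hmin h1S
  by_cases hca : c < a
  · have : c ∈ Ioc 0 a' := ⟨hc, le_trans hca.le (min_le_left _ _)⟩
    exact le_trans hF1 (le_of_lt (ha' this))
  · by_cases hcB : B < c
    · have : b ≤ c := le_trans (le_max_left _ _) hcB.le
      exact le_trans hF1 (le_of_lt (hb c this))
    · exact hmin ⟨not_lt.mp hca, not_lt.mp hcB⟩

/-- Case 3 (β > 0, 1 + β - n - 4l < 0): the MN function attains a global minimum on `(0, ∞)`. -/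
theorem MN_case3_attains_min (n : ℕ) (hn : 1 ≤ n) (β : ℝ) (hβ : 0 < β)
    (σ : ℝ) (hσ : 0 < σ) (l : ℕ) (hl : 1 ≤ l)
    (hexp : 1 + β - n - 4 * l < 0)
    (ξstar : ℝ → ℝ)
    (hξ : ∀ c : ℝ, ξstar c =
      (c * σ + Real.sqrt (c ^ 2 * σ ^ 2 + 4 * σ * (1 + β + n))) / 4)
    (MN : ℝ → ℝ)
    (hMN : ∀ c : ℝ, MN c =
      c ^ ((1 + β - n - 4 * l) / 4) *
        ((ξstar c) ^ ((1 + β + (n : ℝ)) / 2) * Real.exp (c * ξstar c) /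
          Real.exp ((ξstar c) ^ 2 / σ)) ^ ((1 : ℝ) / 2)) :
    ∃ c₀ : ℝ, 0 < c₀ ∧ ∀ c : ℝ, 0 < c → MN c₀ ≤ MN c := by
  have hA : (0:ℝ) < 1 + β + n := by positivity
  have hE : ((1:ℝ) + β - n - 4 * l) / 4 < 0 := div_neg_of_neg_of_pos hexp (by norm_num)
  exact MN_aux (1 + β + n) ((1 + β - n - 4 * l) / 4) σ hA hE hσ ξstar MN hξ hMN
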